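/- Under the bijection Θ of the previous statement, if additionally all diagonal entries c_{i,-i} (i > 0) of T are even, then all diagonal entries r_{i,-i} (i > 0) of R = Θ(T) are even, and conversely: the parity condition on the principal diagonal is preserved in both directions. Specifically, r_{i,-i} = Σ_{u ≥ i} c_{u,-u} + 2 Σ_{u ≥ i ≥ -i ≥ v, u+v > 0} c_{u,v}. -/

import Mathlib

/-- The index set `I = {i ∈ ℤ : i ≡ ε (mod 2), -2m < i < 2m}`. -/
noncomputable def Iset (m : ℕ) (ε : ℤ) : Finset ℤ :=
  (Finset.Ioo (-(2 * (m : ℤ))) (2 * (m : ℤ))).filter (fun i => i % 2 = ε)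

/-- The box multiplicity function: `μ(i,j) = μmax` if `i + j = 0`, and `0` otherwise. -/
def boxMul (μmax : ℕ) (i j : ℤ) : ℕ := if i + j = 0 then μmax else 0

/-- The set of `I`-boxes `b(i,j,k)` with `i,j ∈ I`, `i ≥ j`, `0 ≤ k ≤ μ(i,j)`. -/
noncomputable def Boxes (m : ℕ) (ε : ℤ) (μmax : ℕ) : Finset (ℤ × ℤ × ℕ) :=
  ((Iset m ε) ×ˢ (Iset m ε) ×ˢ Finset.range (μmax + 1)).filter
    (fun b => b.2.1 ≤ b.1 ∧ b.2.2 ≤ boxMul μmax b.1 b.2.1)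

/-- The involution `τ` on `I`-boxes: `τ(b(i,j,k)) = b(-j,-i,k)` when `i + j ≠ 0`,
and `τ(b(i,-i,k)) = b(i,-i,μmax - k)` on the principal diagonal. -/
def boxτ (μmax : ℕ) (b : ℤ × ℤ × ℕ) : ℤ × ℤ × ℕ :=
  if b.1 + b.2.1 = 0 then (b.1, b.2.1, μmax - b.2.2) else (-b.2.1, -b.1, b.2.2)

/-- The support of the box `b(i,j,k)`: `{i' ∈ I : j ≤ i' ≤ i}`. -/
noncomputable def Supp (m : ℕ) (ε : ℤ) (i j : ℤ) : Finset ℤ :=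
  (Iset m ε).filter (fun x => j ≤ x ∧ x ≤ i)

/-- `h_{i'}(b) = #{j'' ∈ I : j ≤ j'' ≤ i'} - #{i'' ∈ I : i' ≤ i'' ≤ i}`. -/
noncomputable def hcoef (m : ℕ) (ε : ℤ) (i j i' : ℤ) : ℤ :=
  (((Iset m ε).filter (fun x => j ≤ x ∧ x ≤ i')).card : ℤ) -
    (((Iset m ε).filter (fun x => i' ≤ x ∧ x ≤ i)).card : ℤ)

/-- `f_{i'}(b) = #{(i'',j'') ∈ I×I : i'' ≥ j'', i' ≤ i'' ≤ i, j < j'' ≤ i'}`. -/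
noncomputable def fcoef (m : ℕ) (ε : ℤ) (i j i' : ℤ) : ℤ :=
  ((((Iset m ε) ×ˢ (Iset m ε)).filter
    (fun p => p.2 ≤ p.1 ∧ i' ≤ p.1 ∧ p.1 ≤ i ∧ j < p.2 ∧ p.2 ≤ i')).card : ℤ)

/-- The dimension vector of a function `c` on boxes: `δ_i(c) = Σ_{b ∈ B, i ∈ Supp(b)} c(b)`. -/
noncomputable def dimvec (m : ℕ) (ε : ℤ) (μmax : ℕ) (c : ℤ × ℤ × ℕ → ℕ) (i : ℤ) : ℕ :=
  ∑ b ∈ (Boxes m ε μmax).filter (fun b => i ∈ Supp m ε b.1 b.2.1), c b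

/-- The top half of the support of the box `b(i,j,k)`:
`{i' ∈ I : (i+j+2)/2 ≤ i' ≤ i}`. -/
noncomputable def SuppTop (m : ℕ) (ε : ℤ) (i j : ℤ) : Finset ℤ :=
  (Iset m ε).filter (fun x => (i + j + 2) / 2 ≤ x ∧ x ≤ i)

/-- The rank map `Θ`: `Θ(c)_{i,j} = Σ_{u ≥ i, j ≥ v, u,v ∈ I} c_{u,v}`,
defined to be `0` outside the domain `{(i,j) : i,j ∈ I, i ≥ j}`. -/
noncomputable def Theta (m : ℕ) (ε : ℤ) (c : ℤ × ℤ → ℕ) : ℤ × ℤ → ℕ :=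
  fun p =>
    if p.1 ∈ Iset m ε ∧ p.2 ∈ Iset m ε ∧ p.2 ≤ p.1 then
      ∑ q ∈ ((Iset m ε) ×ˢ (Iset m ε)).filter (fun q => p.1 ≤ q.1 ∧ q.2 ≤ p.2), c q
    else 0

/-- The set of symmetric `I`-tableaux `(c_{i,j})_{i ≥ j}` (encoded as functions on `ℤ × ℤ`
vanishing outside the domain) with `c_{-j,-i} = c_{i,j}` and dimension vector `δ`,
i.e. `Σ_{u ≥ i ≥ v} c_{u,v} = δ_i` for all `i ∈ I`. -/
def TabSet (m : ℕ) (ε : ℤ) (δ : ℤ → ℕ) : Set (ℤ × ℤ → ℕ) :=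
  {c | (∀ p : ℤ × ℤ, ¬(p.1 ∈ Iset m ε ∧ p.2 ∈ Iset m ε ∧ p.2 ≤ p.1) → c p = 0) ∧
       (∀ i j : ℤ, i ∈ Iset m ε → j ∈ Iset m ε → j ≤ i → c (-j, -i) = c (i, j)) ∧
       (∀ i ∈ Iset m ε,
         ∑ q ∈ ((Iset m ε) ×ˢ (Iset m ε)).filter (fun q => i ≤ q.1 ∧ q.2 ≤ i), c q = δ i)}

/-- The set of symmetric `I`-tableaux `(r_{i,j})_{i ≥ j}` with `r_{i,i} = δ_i` and
`r_{i,j} - r_{i+2,j} - r_{i,j-2} + r_{i+2,j-2} ≥ 0`, with the convention `r_{i,j} = 0`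
when `i ∉ I` or `j ∉ I` (built into the encoding as functions vanishing outside the domain). -/
def RSet (m : ℕ) (ε : ℤ) (δ : ℤ → ℕ) : Set (ℤ × ℤ → ℕ) :=
  {r | (∀ p : ℤ × ℤ, ¬(p.1 ∈ Iset m ε ∧ p.2 ∈ Iset m ε ∧ p.2 ≤ p.1) → r p = 0) ∧
       (∀ i j : ℤ, i ∈ Iset m ε → j ∈ Iset m ε → j ≤ i → r (-j, -i) = r (i, j)) ∧
       (∀ i ∈ Iset m ε, r (i, i) = δ i) ∧
       (∀ i j : ℤ, i ∈ Iset m ε → j ∈ Iset m ε → j ≤ i →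
         (r (i + 2, j) : ℤ) + (r (i, j - 2) : ℤ) ≤ (r (i, j) : ℤ) + (r (i + 2, j - 2) : ℤ))}

lemma neg_mem_Iset (m : ℕ) (ε : ℤ) (hε : ε = 0 ∨ ε = 1) {i : ℤ} (h : i ∈ Iset m ε) :
    -i ∈ Iset m ε := by
  simp only [Iset, Finset.mem_filter, Finset.mem_Ioo] at *
  omega

/-- For a symmetric `I`-tableau `c` of dimension vector `δ`, the diagonal entries of
`R = Θ(c)` satisfy `r_{i,-i} = Σ_{u ≥ i} c_{u,-u} + 2 Σ_{u ≥ i ≥ -i ≥ v, u+v > 0} c_{u,v}`,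
and all diagonal entries `c_{i,-i}` (`i > 0`) of `c` are even if and only if all diagonal
entries `r_{i,-i}` (`i > 0`) of `Θ(c)` are even. -/
theorem stmt12 (m : ℕ) (ε : ℤ) (hε : ε = 0 ∨ ε = 1) (δ : ℤ → ℕ)
    (hδ : ∀ i : ℤ, δ (-i) = δ i) (c : ℤ × ℤ → ℕ) (hc : c ∈ TabSet m ε δ) :
    (∀ i ∈ Iset m ε, 0 < i →
      (Theta m ε c (i, -i) : ℤ) =
        (∑ u ∈ (Iset m ε).filter (fun u => i ≤ u), (c (u, -u) : ℤ)) +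
        2 * ∑ q ∈ ((Iset m ε) ×ˢ (Iset m ε)).filter
              (fun q => i ≤ q.1 ∧ q.2 ≤ -i ∧ 0 < q.1 + q.2), (c q : ℤ)) ∧
    ((∀ i ∈ Iset m ε, 0 < i → 2 ∣ c (i, -i)) ↔
      (∀ i ∈ Iset m ε, 0 < i → 2 ∣ Theta m ε c (i, -i))) := by
  obtain ⟨hzero, hsym, hdim⟩ := hc
  -- the main identity
  have hmain : ∀ i ∈ Iset m ε, 0 < i →
      (Theta m ε c (i, -i) : ℤ) =
        (∑ u ∈ (Iset m ε).filter (fun u => i ≤ u), (c (u, -u) : ℤ)) +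
        2 * ∑ q ∈ ((Iset m ε) ×ˢ (Iset m ε)).filter
              (fun q => i ≤ q.1 ∧ q.2 ≤ -i ∧ 0 < q.1 + q.2), (c q : ℤ) := by
    intro i hi hipos
    have hni : -i ∈ Iset m ε := neg_mem_Iset m ε hε hi
    have hcond : (i, -i).1 ∈ Iset m ε ∧ (i, -i).2 ∈ Iset m ε ∧ (i, -i).2 ≤ (i, -i).1 :=
      ⟨hi, hni, by omega⟩
    rw [Theta, if_pos hcond]
    push_cast
    set P := (Iset m ε) ×ˢ (Iset m ε) with hP
    have hsplit : ∑ q ∈ P.filter (fun q => (i, -i).1 ≤ q.1 ∧ q.2 ≤ (i, -i).2), (c q : ℤ)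
        = (∑ q ∈ P.filter (fun q => i ≤ q.1 ∧ q.2 ≤ -i ∧ q.1 + q.2 = 0), (c q : ℤ))
        + ((∑ q ∈ P.filter (fun q => i ≤ q.1 ∧ q.2 ≤ -i ∧ 0 < q.1 + q.2), (c q : ℤ))
        + (∑ q ∈ P.filter (fun q => i ≤ q.1 ∧ q.2 ≤ -i ∧ q.1 + q.2 < 0), (c q : ℤ))) := by
      rw [← Finset.sum_filter_add_sum_filter_not
        (P.filter (fun q => (i, -i).1 ≤ q.1 ∧ q.2 ≤ (i, -i).2)) (fun q => q.1 + q.2 = 0)]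
      congr 1
      · apply Finset.sum_congr _ (fun _ _ => rfl)
        ext q
        simp only [Finset.mem_filter]
        constructor
        · rintro ⟨⟨h1, h2, h3⟩, h4⟩; exact ⟨h1, h2, h3, h4⟩
        · rintro ⟨h1, h2, h3, h4⟩; exact ⟨⟨h1, h2, h3⟩, h4⟩
      · rw [← Finset.sum_filter_add_sum_filter_not
          ((P.filter (fun q => (i, -i).1 ≤ q.1 ∧ q.2 ≤ (i, -i).2)).filter
            (fun q => ¬ q.1 + q.2 = 0)) (fun q => 0 < q.1 + q.2)]
        congr 1
        · apply Finset.sum_congr _ (fun _ _ => rfl)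
          ext q
          simp only [Finset.mem_filter]
          constructor
          · rintro ⟨⟨⟨h1, h2, h3⟩, _⟩, h5⟩; exact ⟨h1, h2, h3, h5⟩
          · rintro ⟨h1, h2, h3, h4⟩; exact ⟨⟨⟨h1, h2, h3⟩, by omega⟩, h4⟩
        · apply Finset.sum_congr _ (fun _ _ => rfl)
          ext q
          simp only [Finset.mem_filter]
          constructor
          · rintro ⟨⟨⟨h1, h2, h3⟩, h4⟩, h5⟩; exact ⟨h1, h2, h3, by omega⟩
          · rintro ⟨h1, h2, h3, h4⟩; exact ⟨⟨⟨h1, h2, h3⟩, by omega⟩, by omega⟩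
    rw [hsplit]
    have hdiag : ∑ q ∈ P.filter (fun q => i ≤ q.1 ∧ q.2 ≤ -i ∧ q.1 + q.2 = 0), (c q : ℤ)
        = ∑ u ∈ (Iset m ε).filter (fun u => i ≤ u), (c (u, -u) : ℤ) := by
      apply Finset.sum_nbij' (fun q => q.1) (fun u => (u, -u))
      · intro q hq
        simp only [hP, Finset.mem_filter, Finset.mem_product] at hq ⊢
        exact ⟨hq.1.1, hq.2.1⟩
      · intro u hu
        simp only [Finset.mem_filter] at hu
        simp only [hP, Finset.mem_filter, Finset.mem_product]
        exact ⟨⟨hu.1, neg_mem_Iset m ε hε hu.1⟩, hu.2, by omega, by omega⟩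
      · intro q hq
        simp only [hP, Finset.mem_filter, Finset.mem_product] at hq
        have : q.2 = -q.1 := by omega
        exact Prod.ext rfl this.symm
      · intro u hu; rfl
      · intro q hq
        simp only [hP, Finset.mem_filter, Finset.mem_product] at hq
        have : q = (q.1, -q.1) := Prod.ext rfl (by omega)
        rw [← this]
    have hneg : ∑ q ∈ P.filter (fun q => i ≤ q.1 ∧ q.2 ≤ -i ∧ q.1 + q.2 < 0), (c q : ℤ)
        = ∑ q ∈ P.filter (fun q => i ≤ q.1 ∧ q.2 ≤ -i ∧ 0 < q.1 + q.2), (c q : ℤ) := by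
      apply Finset.sum_nbij' (fun q => (-q.2, -q.1)) (fun q => (-q.2, -q.1))
      · intro q hq
        simp only [hP, Finset.mem_filter, Finset.mem_product] at hq ⊢
        exact ⟨⟨neg_mem_Iset m ε hε hq.1.2, neg_mem_Iset m ε hε hq.1.1⟩,
          by omega, by omega, by omega⟩
      · intro q hq
        simp only [hP, Finset.mem_filter, Finset.mem_product] at hq ⊢
        exact ⟨⟨neg_mem_Iset m ε hε hq.1.2, neg_mem_Iset m ε hε hq.1.1⟩,
          by omega, by omega, by omega⟩
      · intro q hq; simp
      · intro q hq; simp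
      · intro q hq
        simp only [hP, Finset.mem_filter, Finset.mem_product] at hq
        have h1 : c (-q.2, -q.1) = c (q.1, q.2) :=
          hsym q.1 q.2 hq.1.1 hq.1.2 (by omega)
        rw [h1]
    rw [hdiag, hneg]
    ring
  refine ⟨hmain, ?_⟩
  -- parity of D i := ∑ u ≥ i, c(u,-u)
  have hDparity : ∀ i ∈ Iset m ε, 0 < i →
      (2 ∣ Theta m ε c (i, -i) ↔
        2 ∣ ∑ u ∈ (Iset m ε).filter (fun u => i ≤ u), c (u, -u)) := by
    intro i hi hipos
    have h := hmain i hi hipos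
    have hcast : (∑ u ∈ (Iset m ε).filter (fun u => i ≤ u), (c (u, -u) : ℤ))
        = ((∑ u ∈ (Iset m ε).filter (fun u => i ≤ u), c (u, -u) : ℕ) : ℤ) := by
      push_cast; rfl
    rw [hcast] at h
    omega
  constructor
  · intro hC i hi hipos
    rw [hDparity i hi hipos]
    apply Finset.dvd_sum
    intro u hu
    simp only [Finset.mem_filter] at hu
    exact hC u hu.1 (by omega)
  · intro hR i hi hipos
    -- D i = c (i,-i) + D (i+2)
    have hIfacts : -(2*(m:ℤ)) < i ∧ i < 2*(m:ℤ) ∧ i % 2 = ε := by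
      simp only [Iset, Finset.mem_filter, Finset.mem_Ioo] at hi
      exact ⟨hi.1.1, hi.1.2, hi.2⟩
    have hstep : (Iset m ε).filter (fun u => i ≤ u)
        = insert i ((Iset m ε).filter (fun u => i + 2 ≤ u)) := by
      ext u
      simp only [Iset, Finset.mem_filter, Finset.mem_Ioo, Finset.mem_insert]
      omega
    have hnotmem : i ∉ (Iset m ε).filter (fun u => i + 2 ≤ u) := by
      simp only [Finset.mem_filter]; omega
    have hsum : ∑ u ∈ (Iset m ε).filter (fun u => i ≤ u), c (u, -u)
        = c (i, -i) + ∑ u ∈ (Iset m ε).filter (fun u => i + 2 ≤ u), c (u, -u) := by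
      rw [hstep, Finset.sum_insert hnotmem]
    have hDi : 2 ∣ ∑ u ∈ (Iset m ε).filter (fun u => i ≤ u), c (u, -u) :=
      (hDparity i hi hipos).mp (hR i hi hipos)
    have hDi2 : 2 ∣ ∑ u ∈ (Iset m ε).filter (fun u => i + 2 ≤ u), c (u, -u) := by
      by_cases h2 : i + 2 ∈ Iset m ε
      · exact (hDparity (i + 2) h2 (by omega)).mp (hR (i + 2) h2 (by omega))
      · have hemp : (Iset m ε).filter (fun u => i + 2 ≤ u) = ∅ := by
          apply Finset.filter_eq_empty_iff.mpr
          intro u hu hle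
          apply h2
          simp only [Iset, Finset.mem_filter, Finset.mem_Ioo] at hu ⊢
          omega
        rw [hemp, Finset.sum_empty]
        exact ⟨0, rfl⟩
    omega
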